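/- Let σ be a probability measure on Ω and let f, g be nonnegative measurable functions with f², g², log f², log g² integrable and f, g > 0 a.e. Let A = {g ≤ f}, α = σ(A), β = 1 − α, and assume 0 < α < 1. Then exp(∫ log f² dσ) + exp(∫ log g² dσ) − exp(∫ log (min(f,g))² dσ) ≤ (∫_A f² dσ / α)^α (∫_{A^c} g² dσ / β)^β ≤ ∫_A f² dσ + ∫_{A^c} g² dσ. -/

import Mathlib

open MeasureTheory

/-- Four-variable exponential inequality: if `c ≤ a` and `c ≤ b` then
`e^a + e^b - e^c ≤ e^(a+b-c)`. -/
lemma exp_helper_stmt18 {a b c : ℝ} (ha : c ≤ a) (hb : c ≤ b) :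
    Real.exp a + Real.exp b - Real.exp c ≤ Real.exp (a + b - c) := by
  have h1 : Real.exp c ≤ Real.exp a := Real.exp_le_exp.2 ha
  have h2 : Real.exp c ≤ Real.exp b := Real.exp_le_exp.2 hb
  have hc : 0 < Real.exp c := Real.exp_pos c
  have key : Real.exp (a + b - c) * Real.exp c = Real.exp a * Real.exp b := by
    rw [← Real.exp_add, ← Real.exp_add]; ring_nf
  nlinarith [mul_nonneg (sub_nonneg.2 h1) (sub_nonneg.2 h2)]

/-- Jensen's inequality for the logarithm over a finite measure. -/
lemma jensen_log_stmt18 {Ω : Type*} [MeasurableSpace Ω] (μ : Measure Ω) [IsFiniteMeasure μ]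
    (h : Ω → ℝ) (hpos : ∀ᵐ ω ∂μ, 0 < h ω)
    (hint : Integrable h μ) (hlint : Integrable (fun ω => Real.log (h ω)) μ)
    (hX : 0 < ∫ ω, h ω ∂μ) (hμ : 0 < (μ Set.univ).toReal) :
    ∫ ω, Real.log (h ω) ∂μ ≤
      (μ Set.univ).toReal * Real.log ((∫ ω, h ω ∂μ) / (μ Set.univ).toReal) := by
  set c := (μ Set.univ).toReal with hc
  set t := (∫ ω, h ω ∂μ) / c with ht
  have htpos : 0 < t := div_pos hX hμ
  have hpt : ∀ᵐ ω ∂μ, Real.log (h ω) ≤ h ω / t + (Real.log t - 1) := by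
    filter_upwards [hpos] with ω hω
    have h0 := Real.log_le_sub_one_of_pos (div_pos hω htpos)
    rw [Real.log_div (ne_of_gt hω) (ne_of_gt htpos)] at h0
    linarith
  have hmono := integral_mono_ae hlint ((hint.div_const t).add (integrable_const _)) hpt
  simp only [Pi.add_apply] at hmono
  have hcalc : ∫ ω, (h ω / t + (Real.log t - 1)) ∂μ = (∫ ω, h ω ∂μ) / t + c * (Real.log t - 1) := by
    rw [integral_add (hint.div_const t) (integrable_const _), integral_div, integral_const,
      smul_eq_mul, measureReal_def]
  have hht : (∫ ω, h ω ∂μ) / t = c := by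
    rw [ht]; field_simp
  rw [hcalc, hht] at hmono
  linarith

theorem stmt_18 {Ω : Type*} [MeasurableSpace Ω] (σ : Measure Ω) [IsProbabilityMeasure σ]
    (f g : Ω → ℝ) (hfm : Measurable f) (hgm : Measurable g)
    (hfpos : ∀ᵐ ω ∂σ, 0 < f ω) (hgpos : ∀ᵐ ω ∂σ, 0 < g ω)
    (hf2 : Integrable (fun ω => f ω ^ 2) σ) (hg2 : Integrable (fun ω => g ω ^ 2) σ)
    (hlf : Integrable (fun ω => Real.log (f ω ^ 2)) σ)
    (hlg : Integrable (fun ω => Real.log (g ω ^ 2)) σ)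
    (A : Set Ω) (hAdef : A = {ω | g ω ≤ f ω})
    (α β : ℝ) (hαdef : α = (σ A).toReal) (hβdef : β = 1 - α)
    (hα : 0 < α) (hα1 : α < 1) :
    Real.exp (∫ ω, Real.log (f ω ^ 2) ∂σ) + Real.exp (∫ ω, Real.log (g ω ^ 2) ∂σ)
        - Real.exp (∫ ω, Real.log (min (f ω) (g ω) ^ 2) ∂σ) ≤
      ((∫ ω in A, f ω ^ 2 ∂σ) / α) ^ α * ((∫ ω in Aᶜ, g ω ^ 2 ∂σ) / β) ^ β ∧
    ((∫ ω in A, f ω ^ 2 ∂σ) / α) ^ α * ((∫ ω in Aᶜ, g ω ^ 2 ∂σ) / β) ^ β ≤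
      (∫ ω in A, f ω ^ 2 ∂σ) + ∫ ω in Aᶜ, g ω ^ 2 ∂σ := by
  have hβpos : 0 < β := by rw [hβdef]; linarith
  have MA : MeasurableSet A := by
    rw [hAdef]; exact measurableSet_le hgm hfm
  -- measurability of the various log-compositions
  have hminm : Measurable (fun ω => Real.log (min (f ω) (g ω) ^ 2)) :=
    Real.measurable_log.comp ((hfm.min hgm).pow_const 2)
  have hmaxm : Measurable (fun ω => Real.log (max (f ω) (g ω) ^ 2)) :=
    Real.measurable_log.comp ((hfm.max hgm).pow_const 2)
  -- integrability of log min² and log max²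
  have hDom : Integrable (fun ω => |Real.log (f ω ^ 2)| + |Real.log (g ω ^ 2)|) σ :=
    hlf.abs.add hlg.abs
  have hmint : Integrable (fun ω => Real.log (min (f ω) (g ω) ^ 2)) σ := by
    refine hDom.mono' hminm.aestronglyMeasurable (Filter.Eventually.of_forall fun ω => ?_)
    rcases min_cases (f ω) (g ω) with ⟨h, -⟩ | ⟨h, -⟩ <;> rw [h] <;>
      simp only [Real.norm_eq_abs]
    · exact le_add_of_nonneg_right (abs_nonneg _)
    · exact le_add_of_nonneg_left (abs_nonneg _)
  have hMint : Integrable (fun ω => Real.log (max (f ω) (g ω) ^ 2)) σ := by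
    refine hDom.mono' hmaxm.aestronglyMeasurable (Filter.Eventually.of_forall fun ω => ?_)
    rcases max_cases (f ω) (g ω) with ⟨h, -⟩ | ⟨h, -⟩ <;> rw [h] <;>
      simp only [Real.norm_eq_abs]
    · exact le_add_of_nonneg_right (abs_nonneg _)
    · exact le_add_of_nonneg_left (abs_nonneg _)
  -- pointwise identity log min² + log max² = log f² + log g²
  have hid : ∀ ω, Real.log (min (f ω) (g ω) ^ 2) + Real.log (max (f ω) (g ω) ^ 2)
      = Real.log (f ω ^ 2) + Real.log (g ω ^ 2) := by
    intro ω
    rcases le_total (f ω) (g ω) with h | h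
    · rw [min_eq_left h, max_eq_right h]
    · rw [min_eq_right h, max_eq_left h]; ring
  -- ∫ log max² = ∫ log f² + ∫ log g² - ∫ log min²
  have hIM : ∫ ω, Real.log (max (f ω) (g ω) ^ 2) ∂σ
      = (∫ ω, Real.log (f ω ^ 2) ∂σ) + (∫ ω, Real.log (g ω ^ 2) ∂σ)
        - ∫ ω, Real.log (min (f ω) (g ω) ^ 2) ∂σ := by
    have h1 := integral_add hmint hMint
    simp only [hid] at h1
    rw [integral_add hlf hlg] at h1
    linarith
  -- ∫ log min² ≤ ∫ log f², ∫ log g²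
  have hmpos : ∀ᵐ ω ∂σ, 0 < min (f ω) (g ω) := by
    filter_upwards [hfpos, hgpos] with ω h1 h2 using lt_min h1 h2
  have hmlef : ∫ ω, Real.log (min (f ω) (g ω) ^ 2) ∂σ ≤ ∫ ω, Real.log (f ω ^ 2) ∂σ := by
    refine integral_mono_ae hmint hlf ?_
    filter_upwards [hmpos] with ω hm
    have : min (f ω) (g ω) ^ 2 ≤ f ω ^ 2 := by
      have := min_le_left (f ω) (g ω); nlinarith
    exact (Real.log_le_log_iff (by positivity) (lt_of_lt_of_le (by positivity) this)).2 this
  have hmleg : ∫ ω, Real.log (min (f ω) (g ω) ^ 2) ∂σ ≤ ∫ ω, Real.log (g ω ^ 2) ∂σ := by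
    refine integral_mono_ae hmint hlg ?_
    filter_upwards [hmpos] with ω hm
    have : min (f ω) (g ω) ^ 2 ≤ g ω ^ 2 := by
      have := min_le_right (f ω) (g ω); nlinarith
    exact (Real.log_le_log_iff (by positivity) (lt_of_lt_of_le (by positivity) this)).2 this
  -- the measures of A and Aᶜ
  have hσA : 0 < σ A := by
    by_contra h
    push_neg at h
    have : σ A = 0 := le_antisymm (by simpa using h) zero_le
    rw [hαdef, this] at hα; simp at hα
  have hσAc : (σ Aᶜ).toReal = β := by
    rw [prob_compl_eq_one_sub MA, ENNReal.toReal_sub_of_le prob_le_one ENNReal.one_ne_top,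
      ENNReal.toReal_one, ← hαdef, hβdef]
  have hσAcpos : 0 < σ Aᶜ := by
    by_contra h
    push_neg at h
    have h0 : σ Aᶜ = 0 := le_antisymm (by simpa using h) zero_le
    rw [h0] at hσAc; simp at hσAc; linarith
  -- positivity of the set integrals
  have hXpos : 0 < ∫ ω in A, f ω ^ 2 ∂σ := by
    rw [integral_pos_iff_support_of_nonneg_ae
      (Filter.Eventually.of_forall fun ω => by positivity) hf2.restrict]
    have hnull : (σ.restrict A) (Function.support (fun ω => f ω ^ 2))ᶜ = 0 := by
      refine le_antisymm (le_trans (Measure.restrict_le_self _) ?_) zero_le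
      have : ∀ᵐ ω ∂σ, ω ∈ Function.support (fun ω => f ω ^ 2) := by
        filter_upwards [hfpos] with ω hω
        simp only [Function.mem_support]
        positivity
      rw [Filter.eventually_iff, mem_ae_iff, Set.setOf_mem_eq] at this
      rw [this]
    have heq : (σ.restrict A) (Function.support (fun ω => f ω ^ 2)) = σ A := by
      rw [measure_congr (ae_eq_univ.2 hnull), Measure.restrict_apply_univ]
    rw [heq]; exact hσA
  have hYpos : 0 < ∫ ω in Aᶜ, g ω ^ 2 ∂σ := by
    rw [integral_pos_iff_support_of_nonneg_ae
      (Filter.Eventually.of_forall fun ω => by positivity) hg2.restrict]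
    have hnull : (σ.restrict Aᶜ) (Function.support (fun ω => g ω ^ 2))ᶜ = 0 := by
      refine le_antisymm (le_trans (Measure.restrict_le_self _) ?_) zero_le
      have : ∀ᵐ ω ∂σ, ω ∈ Function.support (fun ω => g ω ^ 2) := by
        filter_upwards [hgpos] with ω hω
        simp only [Function.mem_support]
        positivity
      rw [Filter.eventually_iff, mem_ae_iff, Set.setOf_mem_eq] at this
      rw [this]
    have heq : (σ.restrict Aᶜ) (Function.support (fun ω => g ω ^ 2)) = σ Aᶜ := by
      rw [measure_congr (ae_eq_univ.2 hnull), Measure.restrict_apply_univ]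
    rw [heq]; exact hσAcpos
  set X := ∫ ω in A, f ω ^ 2 ∂σ with hXdef
  set Y := ∫ ω in Aᶜ, g ω ^ 2 ∂σ with hYdef
  -- Jensen on A
  have hJA : ∫ ω in A, Real.log (f ω ^ 2) ∂σ ≤ α * Real.log (X / α) := by
    have := jensen_log_stmt18 (σ.restrict A) (fun ω => f ω ^ 2)
      ((ae_restrict_of_ae hfpos).mono fun ω hω => by positivity)
      hf2.restrict hlf.restrict hXpos
      (by rw [Measure.restrict_apply_univ, ← hαdef]; exact hα)
    rwa [Measure.restrict_apply_univ, ← hαdef] at this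
  have hJB : ∫ ω in Aᶜ, Real.log (g ω ^ 2) ∂σ ≤ β * Real.log (Y / β) := by
    have := jensen_log_stmt18 (σ.restrict Aᶜ) (fun ω => g ω ^ 2)
      ((ae_restrict_of_ae hgpos).mono fun ω hω => by positivity)
      hg2.restrict hlg.restrict hYpos
      (by rw [Measure.restrict_apply_univ, hσAc]; exact hβpos)
    rwa [Measure.restrict_apply_univ, hσAc] at this
  -- split ∫ log max² over A and Aᶜ
  have hsplit : ∫ ω, Real.log (max (f ω) (g ω) ^ 2) ∂σ
      = (∫ ω in A, Real.log (f ω ^ 2) ∂σ) + ∫ ω in Aᶜ, Real.log (g ω ^ 2) ∂σ := by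
    rw [← integral_add_compl MA hMint]
    congr 1
    · refine setIntegral_congr_fun MA fun ω hω => ?_
      rw [hAdef] at hω
      rw [max_eq_left hω]
    · refine setIntegral_congr_fun MA.compl fun ω hω => ?_
      rw [hAdef] at hω
      simp only [Set.mem_compl_iff, Set.mem_setOf_eq, not_le] at hω
      rw [max_eq_right hω.le]
  have hXα : 0 < X / α := div_pos hXpos hα
  have hYβ : 0 < Y / β := div_pos hYpos hβpos
  have hrpow : (X / α) ^ α * (Y / β) ^ β
      = Real.exp (α * Real.log (X / α) + β * Real.log (Y / β)) := by
    rw [Real.exp_add, Real.rpow_def_of_pos hXα, Real.rpow_def_of_pos hYβ,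
      mul_comm (Real.log (X / α)) α, mul_comm (Real.log (Y / β)) β]
  constructor
  · calc Real.exp (∫ ω, Real.log (f ω ^ 2) ∂σ) + Real.exp (∫ ω, Real.log (g ω ^ 2) ∂σ)
        - Real.exp (∫ ω, Real.log (min (f ω) (g ω) ^ 2) ∂σ)
        ≤ Real.exp ((∫ ω, Real.log (f ω ^ 2) ∂σ) + (∫ ω, Real.log (g ω ^ 2) ∂σ)
            - ∫ ω, Real.log (min (f ω) (g ω) ^ 2) ∂σ) := exp_helper_stmt18 hmlef hmleg
      _ = Real.exp (∫ ω, Real.log (max (f ω) (g ω) ^ 2) ∂σ) := by rw [hIM]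
      _ ≤ Real.exp (α * Real.log (X / α) + β * Real.log (Y / β)) := by
          apply Real.exp_le_exp.2
          rw [hsplit]
          linarith
      _ = (X / α) ^ α * (Y / β) ^ β := hrpow.symm
  · have hyoung := Real.geom_mean_le_arith_mean2_weighted hα.le hβpos.le hXα.le hYβ.le
      (by rw [hβdef]; ring)
    have h1 : α * (X / α) = X := by field_simp
    have h2 : β * (Y / β) = Y := by field_simp
    rw [h1, h2] at hyoung
    exact hyoung
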